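/- Fix an integer M ≥ 1, reals 0 < γ_b < γ_t < 1, w ∈ (0,1), Ae > 0, and a detection threshold z_th with 0 < z_th < Ae. Define t₀(σ,σ₀) = (1−γ_b)·Q(√M·z_th/σ₀) + γ_b·Q((z_th−Ae)/√(σ₀²/M+σ²)) and t₁(σ,σ₀) = (1−γ_t)·Q(√M·z_th/σ₀) + γ_t·Q((z_th−Ae)/√(σ₀²/M+σ²)). Then as (σ, σ₀) → (0⁺, 0⁺), the gap C₁(γ_b, γ_t, w) − C₁(t₀(σ,σ₀), t₁(σ,σ₀), w) tends to 0 (asymptotic tightness of the upper and lower transmission-rate bounds, Proposition 1). -/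

import Mathlib

open MeasureTheory Filter Real

/-- The Gaussian tail function `Q(x) = ∫_x^∞ (1/√(2π)) e^{−u²/2} du`. -/
noncomputable def gaussQ (x : ℝ) : ℝ :=
  ∫ u in Set.Ioi x, (Real.sqrt (2 * Real.pi))⁻¹ * Real.exp (-u ^ 2 / 2)

/-- Binary entropy function. -/
noncomputable def H2 (x : ℝ) : ℝ := -x * Real.log x - (1 - x) * Real.log (1 - x)

/-- Mutual information of a binary asymmetric channel with crossover
parameters `p01, p11` and input probability `w`. -/
noncomputable def C1 (p01 p11 w : ℝ) : ℝ :=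
  H2 (w * p11 + (1 - w) * p01) - w * H2 p11 - (1 - w) * H2 p01

noncomputable def gpdf (u : ℝ) : ℝ := (Real.sqrt (2 * Real.pi))⁻¹ * Real.exp (-u ^ 2 / 2)

lemma gaussQ_def (x : ℝ) : gaussQ x = ∫ u in Set.Ioi x, gpdf u := rfl

lemma gpdf_eq : gpdf = fun u => (Real.sqrt (2 * Real.pi))⁻¹ * Real.exp (-(1/2 : ℝ) * u ^ 2) := by
  funext u
  unfold gpdf
  ring_nf

lemma gpdf_integrable : Integrable gpdf := by
  rw [gpdf_eq]
  exact (integrable_exp_neg_mul_sq (by norm_num : (0:ℝ) < 1/2)).const_mul _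

lemma gpdf_integral : ∫ u, gpdf u = 1 := by
  rw [gpdf_eq]
  rw [MeasureTheory.integral_const_mul, integral_gaussian]
  have h1 : Real.pi / (1/2) = 2 * Real.pi := by ring
  rw [h1]
  exact inv_mul_cancel₀ (Real.sqrt_ne_zero'.mpr (by positivity))

lemma gaussQ_eq (x : ℝ) : gaussQ x = gaussQ 0 - ∫ u in (0:ℝ)..x, gpdf u := by
  have hI := gpdf_integrable
  have h1 : (∫ u in Set.Iic x, gpdf u) + ∫ u in Set.Ioi x, gpdf u = ∫ u, gpdf u :=
    intervalIntegral.integral_Iic_add_Ioi hI.integrableOn hI.integrableOn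
  have h2 : (∫ u in Set.Iic (0:ℝ), gpdf u) + ∫ u in Set.Ioi (0:ℝ), gpdf u = ∫ u, gpdf u :=
    intervalIntegral.integral_Iic_add_Ioi hI.integrableOn hI.integrableOn
  have h3 : ((∫ u in Set.Iic x, gpdf u) - ∫ u in Set.Iic (0:ℝ), gpdf u)
      = ∫ u in (0:ℝ)..x, gpdf u :=
    intervalIntegral.integral_Iic_sub_Iic hI.integrableOn hI.integrableOn
  rw [gaussQ_def, gaussQ_def]
  linarith

lemma tendsto_gaussQ_atTop : Tendsto gaussQ atTop (nhds 0) := by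
  have h := intervalIntegral_tendsto_integral_Ioi (μ := volume) (f := gpdf) (b := id) 0
    gpdf_integrable.integrableOn tendsto_id
  have h2 : Tendsto (fun x => gaussQ 0 - ∫ u in (0:ℝ)..x, gpdf u) atTop
      (nhds (gaussQ 0 - ∫ u in Set.Ioi (0:ℝ), gpdf u)) := tendsto_const_nhds.sub h
  rw [← gaussQ_def, sub_self] at h2
  exact h2.congr fun x => (gaussQ_eq x).symm

lemma tendsto_gaussQ_atBot : Tendsto gaussQ atBot (nhds 1) := by
  have h := intervalIntegral_tendsto_integral_Iic (μ := volume) (f := gpdf) (a := id) 0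
    gpdf_integrable.integrableOn tendsto_id
  have h2 : Tendsto (fun x => gaussQ 0 + ∫ u in x..(0:ℝ), gpdf u) atBot
      (nhds (gaussQ 0 + ∫ u in Set.Iic (0:ℝ), gpdf u)) := tendsto_const_nhds.add h
  have h3 : gaussQ 0 + ∫ u in Set.Iic (0:ℝ), gpdf u = 1 := by
    have := intervalIntegral.integral_Iic_add_Ioi (b := (0:ℝ)) gpdf_integrable.integrableOn
      gpdf_integrable.integrableOn
    rw [gaussQ_def]
    rw [gpdf_integral] at this
    linarith
  rw [h3] at h2
  refine h2.congr fun x => ?_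
  rw [gaussQ_eq x, intervalIntegral.integral_symm]
  ring

lemma H2_continuousAt {x : ℝ} (h0 : x ≠ 0) (h1 : x ≠ 1) : ContinuousAt H2 x := by
  have l1 : ContinuousAt Real.log x := Real.continuousAt_log h0
  have l2 : ContinuousAt (fun y : ℝ => Real.log (1 - y)) x := by
    refine (Real.continuousAt_log ?_).comp ((continuous_const.sub continuous_id).continuousAt)
    intro h; apply h1; linarith [sub_eq_zero.mp h]
  exact ((continuousAt_id.neg.mul l1).sub
    (((continuous_const.sub continuous_id).continuousAt).mul l2))

theorem stmt_0 (M : ℕ) (hM : 1 ≤ M) (γb γt w Ae zth : ℝ)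
    (hγb : 0 < γb) (hγbt : γb < γt) (hγt : γt < 1)
    (hw : w ∈ Set.Ioo (0 : ℝ) 1) (hAe : 0 < Ae)
    (hz1 : 0 < zth) (hz2 : zth < Ae) :
    Tendsto (fun p : ℝ × ℝ =>
        C1 γb γt w -
          C1
            ((1 - γb) * gaussQ (Real.sqrt M * zth / p.2) +
              γb * gaussQ ((zth - Ae) / Real.sqrt (p.2 ^ 2 / M + p.1 ^ 2)))
            ((1 - γt) * gaussQ (Real.sqrt M * zth / p.2) +
              γt * gaussQ ((zth - Ae) / Real.sqrt (p.2 ^ 2 / M + p.1 ^ 2)))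
            w)
      ((nhdsWithin 0 (Set.Ioi 0)) ×ˢ (nhdsWithin 0 (Set.Ioi 0))) (nhds 0) := by
  set L := (nhdsWithin (0:ℝ) (Set.Ioi 0)) ×ˢ (nhdsWithin (0:ℝ) (Set.Ioi 0)) with hL
  have hMpos : (0:ℝ) < M := by exact_mod_cast Nat.lt_of_lt_of_le Nat.zero_lt_one hM
  -- first argument tends to atTop
  have hsnd : Tendsto (fun p : ℝ × ℝ => p.2) L (nhdsWithin 0 (Set.Ioi 0)) := tendsto_snd
  have hfst : Tendsto (fun p : ℝ × ℝ => p.1) L (nhdsWithin 0 (Set.Ioi 0)) := tendsto_fst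
  have hc : (0:ℝ) < Real.sqrt M * zth := mul_pos (Real.sqrt_pos.mpr hMpos) hz1
  have harg1 : Tendsto (fun p : ℝ × ℝ => Real.sqrt M * zth / p.2) L atTop := by
    have := (tendsto_inv_nhdsGT_zero.comp hsnd).const_mul_atTop hc
    simpa [div_eq_mul_inv, Function.comp] using this
  -- denominator tends to 0 within Ioi 0
  have hden0 : Tendsto (fun p : ℝ × ℝ => Real.sqrt (p.2 ^ 2 / M + p.1 ^ 2)) L (nhds 0) := by
    have h1 : Tendsto (fun p : ℝ × ℝ => p.2 ^ 2 / M + p.1 ^ 2) L (nhds 0) := by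
      have := (((hsnd.mono_right nhdsWithin_le_nhds).pow 2).div_const (M:ℝ)).add
        ((hfst.mono_right nhdsWithin_le_nhds).pow 2)
      simpa using this
    have := (Real.continuous_sqrt.continuousAt (x := (0:ℝ))).tendsto.comp h1
    simpa [Function.comp_def] using this
  have hdenpos : ∀ᶠ p : ℝ × ℝ in L, Real.sqrt (p.2 ^ 2 / M + p.1 ^ 2) ∈ Set.Ioi (0:ℝ) := by
    filter_upwards [(eventually_mem_nhdsWithin (s := Set.Ioi (0:ℝ))).prod_inl
      (nhdsWithin (0:ℝ) (Set.Ioi 0))] with p hp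
    have : (0:ℝ) < p.2 ^ 2 / M + p.1 ^ 2 :=
      add_pos_of_nonneg_of_pos (div_nonneg (sq_nonneg _) hMpos.le) (pow_pos hp 2)
    exact Real.sqrt_pos.mpr this
  have hden : Tendsto (fun p : ℝ × ℝ => Real.sqrt (p.2 ^ 2 / M + p.1 ^ 2)) L
      (nhdsWithin 0 (Set.Ioi 0)) :=
    tendsto_nhdsWithin_of_tendsto_nhds_of_eventually_within _ hden0 hdenpos
  have harg2 : Tendsto (fun p : ℝ × ℝ => (zth - Ae) / Real.sqrt (p.2 ^ 2 / M + p.1 ^ 2)) L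
      atBot := by
    have hpos : (0:ℝ) < Ae - zth := by linarith
    have h1 : Tendsto (fun p : ℝ × ℝ => (Ae - zth) / Real.sqrt (p.2 ^ 2 / M + p.1 ^ 2)) L
        atTop := by
      have := (tendsto_inv_nhdsGT_zero.comp hden).const_mul_atTop hpos
      simpa [div_eq_mul_inv, Function.comp] using this
    have := tendsto_neg_atTop_atBot.comp h1
    refine this.congr fun p => ?_
    simp [Function.comp]
    ring
  -- gaussQ limits
  have hQ1 : Tendsto (fun p : ℝ × ℝ => gaussQ (Real.sqrt M * zth / p.2)) L (nhds 0) :=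
    tendsto_gaussQ_atTop.comp harg1
  have hQ2 : Tendsto (fun p : ℝ × ℝ => gaussQ ((zth - Ae) / Real.sqrt (p.2 ^ 2 / M + p.1 ^ 2)))
      L (nhds 1) := tendsto_gaussQ_atBot.comp harg2
  have ht0 : Tendsto (fun p : ℝ × ℝ =>
      (1 - γb) * gaussQ (Real.sqrt M * zth / p.2) +
        γb * gaussQ ((zth - Ae) / Real.sqrt (p.2 ^ 2 / M + p.1 ^ 2))) L (nhds γb) := by
    have := ((hQ1.const_mul (1 - γb)).add (hQ2.const_mul γb))
    simpa using this
  have ht1 : Tendsto (fun p : ℝ × ℝ =>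
      (1 - γt) * gaussQ (Real.sqrt M * zth / p.2) +
        γt * gaussQ ((zth - Ae) / Real.sqrt (p.2 ^ 2 / M + p.1 ^ 2))) L (nhds γt) := by
    have := ((hQ1.const_mul (1 - γt)).add (hQ2.const_mul γt))
    simpa using this
  -- continuity of C1 at (γb, γt)
  obtain ⟨hw0, hw1⟩ := hw
  have hγb1 : γb < 1 := lt_trans hγbt hγt
  have hγt0 : 0 < γt := lt_trans hγb hγbt
  have hs0 : 0 < w * γt + (1 - w) * γb := by nlinarith
  have hs1 : w * γt + (1 - w) * γb < 1 := by nlinarith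
  have hF : ContinuousAt (fun q : ℝ × ℝ => C1 q.1 q.2 w) (γb, γt) := by
    unfold C1
    have h1 : ContinuousAt (fun q : ℝ × ℝ => H2 (w * q.2 + (1 - w) * q.1)) (γb, γt) := by
      show ContinuousAt (H2 ∘ fun q : ℝ × ℝ => w * q.2 + (1 - w) * q.1) (γb, γt)
      exact ContinuousAt.comp (f := fun q : ℝ × ℝ => w * q.2 + (1 - w) * q.1)
        (x := ((γb, γt) : ℝ × ℝ)) (H2_continuousAt (ne_of_gt hs0) (ne_of_lt hs1))
        ((continuous_const.mul continuous_snd).add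
          (continuous_const.mul continuous_fst)).continuousAt
    have h2 : ContinuousAt (fun q : ℝ × ℝ => H2 q.2) (γb, γt) := by
      show ContinuousAt (H2 ∘ Prod.snd) (γb, γt)
      exact (H2_continuousAt (ne_of_gt hγt0) (ne_of_lt hγt)).comp continuous_snd.continuousAt
    have h3 : ContinuousAt (fun q : ℝ × ℝ => H2 q.1) (γb, γt) := by
      show ContinuousAt (H2 ∘ Prod.fst) (γb, γt)
      exact (H2_continuousAt (ne_of_gt hγb) (ne_of_lt hγb1)).comp continuous_fst.continuousAt
    exact (h1.sub (continuousAt_const.mul h2)).sub (continuousAt_const.mul h3)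
  have hcomp := hF.tendsto.comp (ht0.prodMk_nhds ht1)
  have := tendsto_const_nhds (x := C1 γb γt w) (f := L) |>.sub hcomp
  simpa [Function.comp, sub_self] using this
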